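/- Every invertible linear map of ℝ^8 that preserves the Spin(7)-form φ₀ is orthogonal: if A ∈ GL(8,ℝ) satisfies φ₀(Au, Av, Aw, Ax) = φ₀(u,v,w,x) for all u,v,w,x ∈ ℝ^8, then ⟨Au, Av⟩ = ⟨u, v⟩ for all u, v ∈ ℝ^8 (so the stabilizer of φ₀, the group Spin(7), is contained in O(8) and the Euclidean metric is determined by the Spin(7)-structure). -/

import Mathlib

open RealInnerProductSpace

noncomputable section

/-- Euclidean space `ℝ^8`. -/
abbrev E8 : Type := EuclideanSpace ℝ (Fin 8)

/-- The standard orthonormal basis vectors `e_0, …, e_7` of `ℝ^8`. -/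
def e (i : Fin 8) : E8 := EuclideanSpace.single i 1

/-- The elementary alternating 4-form `e^i ∧ e^j ∧ e^k ∧ e^l` evaluated on `(u,v,w,x)`. -/
def wedge4 (i j k l : Fin 8) (u v w x : E8) : ℝ :=
  Matrix.det !![u i, u j, u k, u l;
                v i, v j, v k, v l;
                w i, w j, w k, w l;
                x i, x j, x k, x l]

/-- The standard `Spin(7)`-form `φ₀` on `ℝ^8`:
`φ₀ = e^{0145}+e^{0167}+e^{2345}+e^{2367}+e^{0246}−e^{0257}−e^{1346}+e^{1357}
     −e^{0347}−e^{0356}−e^{1247}−e^{1256}+e^{0123}+e^{4567}`. -/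
def phi0 (u v w x : E8) : ℝ :=
    wedge4 0 1 4 5 u v w x + wedge4 0 1 6 7 u v w x + wedge4 2 3 4 5 u v w x
  + wedge4 2 3 6 7 u v w x + wedge4 0 2 4 6 u v w x - wedge4 0 2 5 7 u v w x
  - wedge4 1 3 4 6 u v w x + wedge4 1 3 5 7 u v w x - wedge4 0 3 4 7 u v w x
  - wedge4 0 3 5 6 u v w x - wedge4 1 2 4 7 u v w x - wedge4 1 2 5 6 u v w x
  + wedge4 0 1 2 3 u v w x + wedge4 4 5 6 7 u v w x

/-- The triple cross product `P : ℝ^8 × ℝ^8 × ℝ^8 → ℝ^8`, determined by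
`⟨P(u,v,w), x⟩ = φ₀(u,v,w,x)` for all `x ∈ ℝ^8`. -/
def P (u v w : E8) : E8 :=
  (WithLp.equiv 2 (Fin 8 → ℝ)).symm (fun i => phi0 u v w (e i))



lemma wedge4_eq (i j k l : Fin 8) (u v w x : E8) : wedge4 i j k l u v w x =
    u i * (v j * (w k * x l) - v j * (w l * x k) - (v k * (w j * x l) - v k * (w l * x j)) + (v l * (w j * x k) - v l * (w k * x j)))
  - u j * (v i * (w k * x l) - v i * (w l * x k) - (v k * (w i * x l) - v k * (w l * x i)) + (v l * (w i * x k) - v l * (w k * x i)))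
  + u k * (v i * (w j * x l) - v i * (w l * x j) - (v j * (w i * x l) - v j * (w l * x i)) + (v l * (w i * x j) - v l * (w j * x i)))
  - u l * (v i * (w j * x k) - v i * (w k * x j) - (v j * (w i * x k) - v j * (w k * x i)) + (v k * (w i * x j) - v k * (w j * x i))) := by
  simp [wedge4, Matrix.det_succ_row_zero, Fin.sum_univ_succ, Fin.succAbove]
  ring

lemma e_apply (m i : Fin 8) : e m i = if i = m then 1 else 0 := by
  simp [e, EuclideanSpace.single_apply]

-- swaps
lemma phi0_swap₃₄ (u v w x : E8) : phi0 u v w x = - phi0 u v x w := by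
  simp only [phi0, wedge4_eq]; ring
lemma phi0_swap₂₃ (u v w x : E8) : phi0 u v w x = - phi0 u w v x := by
  simp only [phi0, wedge4_eq]; ring
lemma phi0_swap₁₂ (u v w x : E8) : phi0 u v w x = - phi0 v u w x := by
  simp only [phi0, wedge4_eq]; ring

def phi0lin₄ (u v w : E8) : E8 →ₗ[ℝ] ℝ where
  toFun x := phi0 u v w x
  map_add' x y := by
    simp only [phi0, wedge4_eq, PiLp.add_apply]; ring
  map_smul' r x := by
    simp only [phi0, wedge4_eq, PiLp.smul_apply, smul_eq_mul, RingHom.id_apply]; ring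

lemma eq_sum_basis (x : E8) : x = ∑ m, x m • e m := by
  have h := (EuclideanSpace.basisFun (Fin 8) ℝ).sum_repr x
  simp only [EuclideanSpace.basisFun_repr, EuclideanSpace.basisFun_apply] at h
  exact h.symm

lemma phi0_expand₄ (u v w x : E8) : phi0 u v w x = ∑ m, x m * phi0 u v w (e m) := by
  have h : phi0 u v w x = phi0lin₄ u v w x := rfl
  rw [h]
  nth_rewrite 1 [eq_sum_basis x]
  rw [map_sum]
  simp [phi0lin₄]

lemma ev_0_0 (w x : E8) : phi0 w x (e 0) (e 0) = 0 := by
  simp only [phi0, wedge4_eq, e_apply, Fin.reduceEq, if_true, if_false, reduceIte]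
  try ring
lemma ev_0_1 (w x : E8) : phi0 w x (e 0) (e 1) = w 2 * x 3 - w 3 * x 2 + w 4 * x 5 - w 5 * x 4 + w 6 * x 7 - w 7 * x 6 := by
  simp only [phi0, wedge4_eq, e_apply, Fin.reduceEq, if_true, if_false, reduceIte]
  try ring
lemma ev_0_2 (w x : E8) : phi0 w x (e 0) (e 2) = - w 1 * x 3 + w 3 * x 1 + w 4 * x 6 - w 5 * x 7 - w 6 * x 4 + w 7 * x 5 := by
  simp only [phi0, wedge4_eq, e_apply, Fin.reduceEq, if_true, if_false, reduceIte]
  try ring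
lemma ev_0_3 (w x : E8) : phi0 w x (e 0) (e 3) = w 1 * x 2 - w 2 * x 1 - w 4 * x 7 - w 5 * x 6 + w 6 * x 5 + w 7 * x 4 := by
  simp only [phi0, wedge4_eq, e_apply, Fin.reduceEq, if_true, if_false, reduceIte]
  try ring
lemma ev_0_4 (w x : E8) : phi0 w x (e 0) (e 4) = - w 1 * x 5 - w 2 * x 6 + w 3 * x 7 + w 5 * x 1 + w 6 * x 2 - w 7 * x 3 := by
  simp only [phi0, wedge4_eq, e_apply, Fin.reduceEq, if_true, if_false, reduceIte]
  try ring
lemma ev_0_5 (w x : E8) : phi0 w x (e 0) (e 5) = w 1 * x 4 + w 2 * x 7 + w 3 * x 6 - w 4 * x 1 - w 6 * x 3 - w 7 * x 2 := by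
  simp only [phi0, wedge4_eq, e_apply, Fin.reduceEq, if_true, if_false, reduceIte]
  try ring
lemma ev_0_6 (w x : E8) : phi0 w x (e 0) (e 6) = - w 1 * x 7 + w 2 * x 4 - w 3 * x 5 - w 4 * x 2 + w 5 * x 3 + w 7 * x 1 := by
  simp only [phi0, wedge4_eq, e_apply, Fin.reduceEq, if_true, if_false, reduceIte]
  try ring
lemma ev_0_7 (w x : E8) : phi0 w x (e 0) (e 7) = w 1 * x 6 - w 2 * x 5 - w 3 * x 4 + w 4 * x 3 + w 5 * x 2 - w 6 * x 1 := by
  simp only [phi0, wedge4_eq, e_apply, Fin.reduceEq, if_true, if_false, reduceIte]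
  try ring
lemma ev_1_0 (w x : E8) : phi0 w x (e 1) (e 0) = - w 2 * x 3 + w 3 * x 2 - w 4 * x 5 + w 5 * x 4 - w 6 * x 7 + w 7 * x 6 := by
  simp only [phi0, wedge4_eq, e_apply, Fin.reduceEq, if_true, if_false, reduceIte]
  try ring
lemma ev_1_1 (w x : E8) : phi0 w x (e 1) (e 1) = 0 := by
  simp only [phi0, wedge4_eq, e_apply, Fin.reduceEq, if_true, if_false, reduceIte]
  try ring
lemma ev_1_2 (w x : E8) : phi0 w x (e 1) (e 2) = w 0 * x 3 - w 3 * x 0 - w 4 * x 7 - w 5 * x 6 + w 6 * x 5 + w 7 * x 4 := by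
  simp only [phi0, wedge4_eq, e_apply, Fin.reduceEq, if_true, if_false, reduceIte]
  try ring
lemma ev_1_3 (w x : E8) : phi0 w x (e 1) (e 3) = - w 0 * x 2 + w 2 * x 0 - w 4 * x 6 + w 5 * x 7 + w 6 * x 4 - w 7 * x 5 := by
  simp only [phi0, wedge4_eq, e_apply, Fin.reduceEq, if_true, if_false, reduceIte]
  try ring
lemma ev_1_4 (w x : E8) : phi0 w x (e 1) (e 4) = w 0 * x 5 + w 2 * x 7 + w 3 * x 6 - w 5 * x 0 - w 6 * x 3 - w 7 * x 2 := by
  simp only [phi0, wedge4_eq, e_apply, Fin.reduceEq, if_true, if_false, reduceIte]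
  try ring
lemma ev_1_5 (w x : E8) : phi0 w x (e 1) (e 5) = - w 0 * x 4 + w 2 * x 6 - w 3 * x 7 + w 4 * x 0 - w 6 * x 2 + w 7 * x 3 := by
  simp only [phi0, wedge4_eq, e_apply, Fin.reduceEq, if_true, if_false, reduceIte]
  try ring
lemma ev_1_6 (w x : E8) : phi0 w x (e 1) (e 6) = w 0 * x 7 - w 2 * x 5 - w 3 * x 4 + w 4 * x 3 + w 5 * x 2 - w 7 * x 0 := by
  simp only [phi0, wedge4_eq, e_apply, Fin.reduceEq, if_true, if_false, reduceIte]
  try ring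
lemma ev_1_7 (w x : E8) : phi0 w x (e 1) (e 7) = - w 0 * x 6 - w 2 * x 4 + w 3 * x 5 + w 4 * x 2 - w 5 * x 3 + w 6 * x 0 := by
  simp only [phi0, wedge4_eq, e_apply, Fin.reduceEq, if_true, if_false, reduceIte]
  try ring
lemma ev_2_0 (w x : E8) : phi0 w x (e 2) (e 0) = w 1 * x 3 - w 3 * x 1 - w 4 * x 6 + w 5 * x 7 + w 6 * x 4 - w 7 * x 5 := by
  simp only [phi0, wedge4_eq, e_apply, Fin.reduceEq, if_true, if_false, reduceIte]
  try ring
lemma ev_2_1 (w x : E8) : phi0 w x (e 2) (e 1) = - w 0 * x 3 + w 3 * x 0 + w 4 * x 7 + w 5 * x 6 - w 6 * x 5 - w 7 * x 4 := by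
  simp only [phi0, wedge4_eq, e_apply, Fin.reduceEq, if_true, if_false, reduceIte]
  try ring
lemma ev_2_2 (w x : E8) : phi0 w x (e 2) (e 2) = 0 := by
  simp only [phi0, wedge4_eq, e_apply, Fin.reduceEq, if_true, if_false, reduceIte]
  try ring
lemma ev_2_3 (w x : E8) : phi0 w x (e 2) (e 3) = w 0 * x 1 - w 1 * x 0 + w 4 * x 5 - w 5 * x 4 + w 6 * x 7 - w 7 * x 6 := by
  simp only [phi0, wedge4_eq, e_apply, Fin.reduceEq, if_true, if_false, reduceIte]
  try ring
lemma ev_2_4 (w x : E8) : phi0 w x (e 2) (e 4) = w 0 * x 6 - w 1 * x 7 - w 3 * x 5 + w 5 * x 3 - w 6 * x 0 + w 7 * x 1 := by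
  simp only [phi0, wedge4_eq, e_apply, Fin.reduceEq, if_true, if_false, reduceIte]
  try ring
lemma ev_2_5 (w x : E8) : phi0 w x (e 2) (e 5) = - w 0 * x 7 - w 1 * x 6 + w 3 * x 4 - w 4 * x 3 + w 6 * x 1 + w 7 * x 0 := by
  simp only [phi0, wedge4_eq, e_apply, Fin.reduceEq, if_true, if_false, reduceIte]
  try ring
lemma ev_2_6 (w x : E8) : phi0 w x (e 2) (e 6) = - w 0 * x 4 + w 1 * x 5 - w 3 * x 7 + w 4 * x 0 - w 5 * x 1 + w 7 * x 3 := by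
  simp only [phi0, wedge4_eq, e_apply, Fin.reduceEq, if_true, if_false, reduceIte]
  try ring
lemma ev_2_7 (w x : E8) : phi0 w x (e 2) (e 7) = w 0 * x 5 + w 1 * x 4 + w 3 * x 6 - w 4 * x 1 - w 5 * x 0 - w 6 * x 3 := by
  simp only [phi0, wedge4_eq, e_apply, Fin.reduceEq, if_true, if_false, reduceIte]
  try ring
lemma ev_3_0 (w x : E8) : phi0 w x (e 3) (e 0) = - w 1 * x 2 + w 2 * x 1 + w 4 * x 7 + w 5 * x 6 - w 6 * x 5 - w 7 * x 4 := by
  simp only [phi0, wedge4_eq, e_apply, Fin.reduceEq, if_true, if_false, reduceIte]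
  try ring
lemma ev_3_1 (w x : E8) : phi0 w x (e 3) (e 1) = w 0 * x 2 - w 2 * x 0 + w 4 * x 6 - w 5 * x 7 - w 6 * x 4 + w 7 * x 5 := by
  simp only [phi0, wedge4_eq, e_apply, Fin.reduceEq, if_true, if_false, reduceIte]
  try ring
lemma ev_3_2 (w x : E8) : phi0 w x (e 3) (e 2) = - w 0 * x 1 + w 1 * x 0 - w 4 * x 5 + w 5 * x 4 - w 6 * x 7 + w 7 * x 6 := by
  simp only [phi0, wedge4_eq, e_apply, Fin.reduceEq, if_true, if_false, reduceIte]
  try ring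
lemma ev_3_3 (w x : E8) : phi0 w x (e 3) (e 3) = 0 := by
  simp only [phi0, wedge4_eq, e_apply, Fin.reduceEq, if_true, if_false, reduceIte]
  try ring
lemma ev_3_4 (w x : E8) : phi0 w x (e 3) (e 4) = - w 0 * x 7 - w 1 * x 6 + w 2 * x 5 - w 5 * x 2 + w 6 * x 1 + w 7 * x 0 := by
  simp only [phi0, wedge4_eq, e_apply, Fin.reduceEq, if_true, if_false, reduceIte]
  try ring
lemma ev_3_5 (w x : E8) : phi0 w x (e 3) (e 5) = - w 0 * x 6 + w 1 * x 7 - w 2 * x 4 + w 4 * x 2 + w 6 * x 0 - w 7 * x 1 := by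
  simp only [phi0, wedge4_eq, e_apply, Fin.reduceEq, if_true, if_false, reduceIte]
  try ring
lemma ev_3_6 (w x : E8) : phi0 w x (e 3) (e 6) = w 0 * x 5 + w 1 * x 4 + w 2 * x 7 - w 4 * x 1 - w 5 * x 0 - w 7 * x 2 := by
  simp only [phi0, wedge4_eq, e_apply, Fin.reduceEq, if_true, if_false, reduceIte]
  try ring
lemma ev_3_7 (w x : E8) : phi0 w x (e 3) (e 7) = w 0 * x 4 - w 1 * x 5 - w 2 * x 6 - w 4 * x 0 + w 5 * x 1 + w 6 * x 2 := by
  simp only [phi0, wedge4_eq, e_apply, Fin.reduceEq, if_true, if_false, reduceIte]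
  try ring
lemma ev_4_0 (w x : E8) : phi0 w x (e 4) (e 0) = w 1 * x 5 + w 2 * x 6 - w 3 * x 7 - w 5 * x 1 - w 6 * x 2 + w 7 * x 3 := by
  simp only [phi0, wedge4_eq, e_apply, Fin.reduceEq, if_true, if_false, reduceIte]
  try ring
lemma ev_4_1 (w x : E8) : phi0 w x (e 4) (e 1) = - w 0 * x 5 - w 2 * x 7 - w 3 * x 6 + w 5 * x 0 + w 6 * x 3 + w 7 * x 2 := by
  simp only [phi0, wedge4_eq, e_apply, Fin.reduceEq, if_true, if_false, reduceIte]
  try ring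
lemma ev_4_2 (w x : E8) : phi0 w x (e 4) (e 2) = - w 0 * x 6 + w 1 * x 7 + w 3 * x 5 - w 5 * x 3 + w 6 * x 0 - w 7 * x 1 := by
  simp only [phi0, wedge4_eq, e_apply, Fin.reduceEq, if_true, if_false, reduceIte]
  try ring
lemma ev_4_3 (w x : E8) : phi0 w x (e 4) (e 3) = w 0 * x 7 + w 1 * x 6 - w 2 * x 5 + w 5 * x 2 - w 6 * x 1 - w 7 * x 0 := by
  simp only [phi0, wedge4_eq, e_apply, Fin.reduceEq, if_true, if_false, reduceIte]
  try ring
lemma ev_4_4 (w x : E8) : phi0 w x (e 4) (e 4) = 0 := by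
  simp only [phi0, wedge4_eq, e_apply, Fin.reduceEq, if_true, if_false, reduceIte]
  try ring
lemma ev_4_5 (w x : E8) : phi0 w x (e 4) (e 5) = w 0 * x 1 - w 1 * x 0 + w 2 * x 3 - w 3 * x 2 + w 6 * x 7 - w 7 * x 6 := by
  simp only [phi0, wedge4_eq, e_apply, Fin.reduceEq, if_true, if_false, reduceIte]
  try ring
lemma ev_4_6 (w x : E8) : phi0 w x (e 4) (e 6) = w 0 * x 2 - w 1 * x 3 - w 2 * x 0 + w 3 * x 1 - w 5 * x 7 + w 7 * x 5 := by
  simp only [phi0, wedge4_eq, e_apply, Fin.reduceEq, if_true, if_false, reduceIte]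
  try ring
lemma ev_4_7 (w x : E8) : phi0 w x (e 4) (e 7) = - w 0 * x 3 - w 1 * x 2 + w 2 * x 1 + w 3 * x 0 + w 5 * x 6 - w 6 * x 5 := by
  simp only [phi0, wedge4_eq, e_apply, Fin.reduceEq, if_true, if_false, reduceIte]
  try ring
lemma ev_5_0 (w x : E8) : phi0 w x (e 5) (e 0) = - w 1 * x 4 - w 2 * x 7 - w 3 * x 6 + w 4 * x 1 + w 6 * x 3 + w 7 * x 2 := by
  simp only [phi0, wedge4_eq, e_apply, Fin.reduceEq, if_true, if_false, reduceIte]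
  try ring
lemma ev_5_1 (w x : E8) : phi0 w x (e 5) (e 1) = w 0 * x 4 - w 2 * x 6 + w 3 * x 7 - w 4 * x 0 + w 6 * x 2 - w 7 * x 3 := by
  simp only [phi0, wedge4_eq, e_apply, Fin.reduceEq, if_true, if_false, reduceIte]
  try ring
lemma ev_5_2 (w x : E8) : phi0 w x (e 5) (e 2) = w 0 * x 7 + w 1 * x 6 - w 3 * x 4 + w 4 * x 3 - w 6 * x 1 - w 7 * x 0 := by
  simp only [phi0, wedge4_eq, e_apply, Fin.reduceEq, if_true, if_false, reduceIte]
  try ring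
lemma ev_5_3 (w x : E8) : phi0 w x (e 5) (e 3) = w 0 * x 6 - w 1 * x 7 + w 2 * x 4 - w 4 * x 2 - w 6 * x 0 + w 7 * x 1 := by
  simp only [phi0, wedge4_eq, e_apply, Fin.reduceEq, if_true, if_false, reduceIte]
  try ring
lemma ev_5_4 (w x : E8) : phi0 w x (e 5) (e 4) = - w 0 * x 1 + w 1 * x 0 - w 2 * x 3 + w 3 * x 2 - w 6 * x 7 + w 7 * x 6 := by
  simp only [phi0, wedge4_eq, e_apply, Fin.reduceEq, if_true, if_false, reduceIte]
  try ring
lemma ev_5_5 (w x : E8) : phi0 w x (e 5) (e 5) = 0 := by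
  simp only [phi0, wedge4_eq, e_apply, Fin.reduceEq, if_true, if_false, reduceIte]
  try ring
lemma ev_5_6 (w x : E8) : phi0 w x (e 5) (e 6) = - w 0 * x 3 - w 1 * x 2 + w 2 * x 1 + w 3 * x 0 + w 4 * x 7 - w 7 * x 4 := by
  simp only [phi0, wedge4_eq, e_apply, Fin.reduceEq, if_true, if_false, reduceIte]
  try ring
lemma ev_5_7 (w x : E8) : phi0 w x (e 5) (e 7) = - w 0 * x 2 + w 1 * x 3 + w 2 * x 0 - w 3 * x 1 - w 4 * x 6 + w 6 * x 4 := by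
  simp only [phi0, wedge4_eq, e_apply, Fin.reduceEq, if_true, if_false, reduceIte]
  try ring
lemma ev_6_0 (w x : E8) : phi0 w x (e 6) (e 0) = w 1 * x 7 - w 2 * x 4 + w 3 * x 5 + w 4 * x 2 - w 5 * x 3 - w 7 * x 1 := by
  simp only [phi0, wedge4_eq, e_apply, Fin.reduceEq, if_true, if_false, reduceIte]
  try ring
lemma ev_6_1 (w x : E8) : phi0 w x (e 6) (e 1) = - w 0 * x 7 + w 2 * x 5 + w 3 * x 4 - w 4 * x 3 - w 5 * x 2 + w 7 * x 0 := by
  simp only [phi0, wedge4_eq, e_apply, Fin.reduceEq, if_true, if_false, reduceIte]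
  try ring
lemma ev_6_2 (w x : E8) : phi0 w x (e 6) (e 2) = w 0 * x 4 - w 1 * x 5 + w 3 * x 7 - w 4 * x 0 + w 5 * x 1 - w 7 * x 3 := by
  simp only [phi0, wedge4_eq, e_apply, Fin.reduceEq, if_true, if_false, reduceIte]
  try ring
lemma ev_6_3 (w x : E8) : phi0 w x (e 6) (e 3) = - w 0 * x 5 - w 1 * x 4 - w 2 * x 7 + w 4 * x 1 + w 5 * x 0 + w 7 * x 2 := by
  simp only [phi0, wedge4_eq, e_apply, Fin.reduceEq, if_true, if_false, reduceIte]
  try ring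
lemma ev_6_4 (w x : E8) : phi0 w x (e 6) (e 4) = - w 0 * x 2 + w 1 * x 3 + w 2 * x 0 - w 3 * x 1 + w 5 * x 7 - w 7 * x 5 := by
  simp only [phi0, wedge4_eq, e_apply, Fin.reduceEq, if_true, if_false, reduceIte]
  try ring
lemma ev_6_5 (w x : E8) : phi0 w x (e 6) (e 5) = w 0 * x 3 + w 1 * x 2 - w 2 * x 1 - w 3 * x 0 - w 4 * x 7 + w 7 * x 4 := by
  simp only [phi0, wedge4_eq, e_apply, Fin.reduceEq, if_true, if_false, reduceIte]
  try ring
lemma ev_6_6 (w x : E8) : phi0 w x (e 6) (e 6) = 0 := by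
  simp only [phi0, wedge4_eq, e_apply, Fin.reduceEq, if_true, if_false, reduceIte]
  try ring
lemma ev_6_7 (w x : E8) : phi0 w x (e 6) (e 7) = w 0 * x 1 - w 1 * x 0 + w 2 * x 3 - w 3 * x 2 + w 4 * x 5 - w 5 * x 4 := by
  simp only [phi0, wedge4_eq, e_apply, Fin.reduceEq, if_true, if_false, reduceIte]
  try ring
lemma ev_7_0 (w x : E8) : phi0 w x (e 7) (e 0) = - w 1 * x 6 + w 2 * x 5 + w 3 * x 4 - w 4 * x 3 - w 5 * x 2 + w 6 * x 1 := by
  simp only [phi0, wedge4_eq, e_apply, Fin.reduceEq, if_true, if_false, reduceIte]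
  try ring
lemma ev_7_1 (w x : E8) : phi0 w x (e 7) (e 1) = w 0 * x 6 + w 2 * x 4 - w 3 * x 5 - w 4 * x 2 + w 5 * x 3 - w 6 * x 0 := by
  simp only [phi0, wedge4_eq, e_apply, Fin.reduceEq, if_true, if_false, reduceIte]
  try ring
lemma ev_7_2 (w x : E8) : phi0 w x (e 7) (e 2) = - w 0 * x 5 - w 1 * x 4 - w 3 * x 6 + w 4 * x 1 + w 5 * x 0 + w 6 * x 3 := by
  simp only [phi0, wedge4_eq, e_apply, Fin.reduceEq, if_true, if_false, reduceIte]
  try ring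
lemma ev_7_3 (w x : E8) : phi0 w x (e 7) (e 3) = - w 0 * x 4 + w 1 * x 5 + w 2 * x 6 + w 4 * x 0 - w 5 * x 1 - w 6 * x 2 := by
  simp only [phi0, wedge4_eq, e_apply, Fin.reduceEq, if_true, if_false, reduceIte]
  try ring
lemma ev_7_4 (w x : E8) : phi0 w x (e 7) (e 4) = w 0 * x 3 + w 1 * x 2 - w 2 * x 1 - w 3 * x 0 - w 5 * x 6 + w 6 * x 5 := by
  simp only [phi0, wedge4_eq, e_apply, Fin.reduceEq, if_true, if_false, reduceIte]
  try ring
lemma ev_7_5 (w x : E8) : phi0 w x (e 7) (e 5) = w 0 * x 2 - w 1 * x 3 - w 2 * x 0 + w 3 * x 1 + w 4 * x 6 - w 6 * x 4 := by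
  simp only [phi0, wedge4_eq, e_apply, Fin.reduceEq, if_true, if_false, reduceIte]
  try ring
lemma ev_7_6 (w x : E8) : phi0 w x (e 7) (e 6) = - w 0 * x 1 + w 1 * x 0 - w 2 * x 3 + w 3 * x 2 - w 4 * x 5 + w 5 * x 4 := by
  simp only [phi0, wedge4_eq, e_apply, Fin.reduceEq, if_true, if_false, reduceIte]
  try ring
lemma ev_7_7 (w x : E8) : phi0 w x (e 7) (e 7) = 0 := by
  simp only [phi0, wedge4_eq, e_apply, Fin.reduceEq, if_true, if_false, reduceIte]
  try ring

set_option maxHeartbeats 2000000 in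
lemma key_identity (w x : E8) : (∑ k, ∑ l, (phi0 w x (e k) (e l))^2) = 6 * ((∑ i, w i * w i) * (∑ i, x i * x i) - (∑ i, w i * x i)^2) := by
  simp only [Fin.sum_univ_eight, ev_0_0, ev_0_1, ev_0_2, ev_0_3, ev_0_4, ev_0_5, ev_0_6, ev_0_7, ev_1_0, ev_1_1, ev_1_2, ev_1_3, ev_1_4, ev_1_5, ev_1_6, ev_1_7, ev_2_0, ev_2_1, ev_2_2, ev_2_3, ev_2_4, ev_2_5, ev_2_6, ev_2_7, ev_3_0, ev_3_1, ev_3_2, ev_3_3, ev_3_4, ev_3_5, ev_3_6, ev_3_7, ev_4_0, ev_4_1, ev_4_2, ev_4_3, ev_4_4, ev_4_5, ev_4_6, ev_4_7, ev_5_0, ev_5_1, ev_5_2, ev_5_3, ev_5_4, ev_5_5, ev_5_6, ev_5_7, ev_6_0, ev_6_1, ev_6_2, ev_6_3, ev_6_4, ev_6_5, ev_6_6, ev_6_7, ev_7_0, ev_7_1, ev_7_2, ev_7_3, ev_7_4, ev_7_5, ev_7_6, ev_7_7]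
  ring


-- scalar multiplication in each slot
lemma phi0_smul₁ (r : ℝ) (u v w x : E8) : phi0 (r • u) v w x = r * phi0 u v w x := by
  simp only [phi0, wedge4_eq, PiLp.smul_apply, smul_eq_mul]; ring
lemma phi0_smul₂ (r : ℝ) (u v w x : E8) : phi0 u (r • v) w x = r * phi0 u v w x := by
  simp only [phi0, wedge4_eq, PiLp.smul_apply, smul_eq_mul]; ring
lemma phi0_smul₃ (r : ℝ) (u v w x : E8) : phi0 u v (r • w) x = r * phi0 u v w x := by
  simp only [phi0, wedge4_eq, PiLp.smul_apply, smul_eq_mul]; ring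
lemma phi0_smul₄ (r : ℝ) (u v w x : E8) : phi0 u v w (r • x) = r * phi0 u v w x := by
  simp only [phi0, wedge4_eq, PiLp.smul_apply, smul_eq_mul]; ring

-- squared swaps
lemma sqA (u v w x : E8) : (phi0 u v w x)^2 = (phi0 v u w x)^2 := by
  rw [phi0_swap₁₂ u v w x, neg_sq]
lemma sqB (u v w x : E8) : (phi0 u v w x)^2 = (phi0 u w v x)^2 := by
  rw [phi0_swap₂₃ u v w x, neg_sq]
lemma sqC (u v w x : E8) : (phi0 u v w x)^2 = (phi0 u v x w)^2 := by
  rw [phi0_swap₃₄ u v w x, neg_sq]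

lemma phi0_inner_P (u v w x : E8) : phi0 u v w x = ⟪P u v w, x⟫ := by
  rw [phi0_expand₄ u v w x, PiLp.inner_apply]
  apply Finset.sum_congr rfl
  intro m _
  have hP : (P u v w) m = phi0 u v w (e m) := rfl
  simp [hP, mul_comm]

-- Parseval: replace an orthonormal basis in the 4th slot with the standard one
lemma swap4 (β : OrthonormalBasis (Fin 8) ℝ E8) (u v w : E8) :
    (∑ i, (phi0 u v w (β i))^2) = ∑ i, (phi0 u v w (e i))^2 := by
  have h : ∀ (γ : OrthonormalBasis (Fin 8) ℝ E8),
      (∑ i, (phi0 u v w (γ i))^2) = ⟪P u v w, P u v w⟫ := by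
    intro γ
    rw [← OrthonormalBasis.sum_inner_mul_inner γ (P u v w) (P u v w)]
    apply Finset.sum_congr rfl
    intro i _
    rw [sq]
    congr 1
    · exact phi0_inner_P u v w (γ i)
    · rw [real_inner_comm]; exact phi0_inner_P u v w (γ i)
  rw [h β]
  have he : ∀ i, e i = (EuclideanSpace.basisFun (Fin 8) ℝ) i := by
    intro i; rw [EuclideanSpace.basisFun_apply]; rfl
  simp_rw [he]
  rw [h (EuclideanSpace.basisFun (Fin 8) ℝ)]

lemma inner_eq_sum (w x : E8) : ⟪w, x⟫ = ∑ i, w i * x i := by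
  rw [PiLp.inner_apply]; simp [mul_comm]

-- the master 2-slot identity for an arbitrary orthonormal basis
lemma M2 (β : OrthonormalBasis (Fin 8) ℝ E8) (w x : E8) :
    (∑ k, ∑ l, (phi0 w x (β k) (β l))^2) = 6 * (⟪w,w⟫ * ⟪x,x⟫ - ⟪w,x⟫^2) := by
  have step1 : (∑ k, ∑ l, (phi0 w x (β k) (β l))^2)
      = ∑ k, ∑ l, (phi0 w x (β k) (e l))^2 := by
    exact Finset.sum_congr rfl fun k _ => swap4 β w x (β k)
  rw [step1, Finset.sum_comm]
  have step2 : ∀ l, (∑ k, (phi0 w x (β k) (e l))^2) = ∑ k, (phi0 w x (e l) (e k))^2 := by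
    intro l
    have : (∑ k, (phi0 w x (β k) (e l))^2) = ∑ k, (phi0 w x (e l) (β k))^2 :=
      Finset.sum_congr rfl fun k _ => sqC w x (β k) (e l)
    rw [this, swap4 β w x (e l)]
  rw [Finset.sum_congr rfl fun l _ => step2 l]
  have : (∑ l, ∑ k, (phi0 w x (e l) (e k))^2) = ∑ k, ∑ l, (phi0 w x (e k) (e l))^2 := rfl
  rw [this, key_identity, inner_eq_sum w w, inner_eq_sum x x, inner_eq_sum w x]

-- 3-slot identity
lemma M3 (β : OrthonormalBasis (Fin 8) ℝ E8) (x : E8) :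
    (∑ j, ∑ k, ∑ l, (phi0 x (β j) (β k) (β l))^2) = 42 * ⟪x,x⟫ := by
  have step : ∀ j, (∑ k, ∑ l, (phi0 x (β j) (β k) (β l))^2)
      = 6 * (⟪x,x⟫ * ⟪β j, β j⟫ - ⟪x, β j⟫^2) := fun j => M2 β x (β j)
  rw [Finset.sum_congr rfl fun j _ => step j]
  have hβ : ∀ j, (⟪β j, β j⟫ : ℝ) = 1 := fun j => by
    have h := orthonormal_iff_ite.mp β.orthonormal j j
    simpa using h
  have hpar : (∑ j, ⟪x, β j⟫^2) = ⟪x,x⟫ := by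
    rw [← OrthonormalBasis.sum_inner_mul_inner β x x]
    exact Finset.sum_congr rfl fun j _ => by rw [sq, real_inner_comm (β j) x]
  have expand : (∑ j, 6 * (⟪x,x⟫ * ⟪β j, β j⟫ - ⟪x, β j⟫^2))
      = (∑ j : Fin 8, 6 * ⟪x,x⟫ * ⟪β j, β j⟫) - 6 * (∑ j, ⟪x, β j⟫^2) := by
    rw [Finset.mul_sum, ← Finset.sum_sub_distrib]
    exact Finset.sum_congr rfl fun j _ => by ring
  rw [expand, hpar]
  rw [Finset.sum_congr rfl fun j (_ : j ∈ Finset.univ) => by rw [hβ j]]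
  simp
  ring


-- ### sum manipulation helpers
section SumHelpers
variable (f : Fin 8 → Fin 8 → Fin 8 → Fin 8 → ℝ) (g3 : Fin 8 → Fin 8 → Fin 8 → ℝ)
  (g2 : Fin 8 → Fin 8 → ℝ)

lemma sum2_mul (c : ℝ) : (∑ a, ∑ b, g2 a b * c) = (∑ a, ∑ b, g2 a b) * c := by
  simp only [← Finset.sum_mul]

lemma sum3_mul (c : ℝ) : (∑ a, ∑ b, ∑ d, g3 a b d * c) = (∑ a, ∑ b, ∑ d, g3 a b d) * c := by
  simp only [← Finset.sum_mul]

lemma sum3_perm3 : (∑ a, ∑ b, ∑ d, g3 a b d) = ∑ d, ∑ a, ∑ b, g3 a b d := by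
  rw [show (∑ a, ∑ b, ∑ d, g3 a b d) = ∑ a, ∑ d, ∑ b, g3 a b d from
    Finset.sum_congr rfl fun a _ => Finset.sum_comm]
  exact Finset.sum_comm

lemma sum4_swap12 : (∑ i, ∑ j, ∑ k, ∑ l, f i j k l) = ∑ j, ∑ i, ∑ k, ∑ l, f i j k l :=
  Finset.sum_comm

lemma sum4_perm3 : (∑ i, ∑ j, ∑ k, ∑ l, f i j k l) = ∑ k, ∑ i, ∑ j, ∑ l, f i j k l := by
  rw [show (∑ i, ∑ j, ∑ k, ∑ l, f i j k l) = ∑ i, ∑ k, ∑ j, ∑ l, f i j k l from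
    Finset.sum_congr rfl fun i _ => Finset.sum_comm]
  exact Finset.sum_comm

lemma sum4_perm4 : (∑ i, ∑ j, ∑ k, ∑ l, f i j k l) = ∑ l, ∑ i, ∑ j, ∑ k, f i j k l := by
  rw [show (∑ i, ∑ j, ∑ k, ∑ l, f i j k l) = ∑ i, ∑ l, ∑ j, ∑ k, f i j k l from
    Finset.sum_congr rfl fun i _ => sum3_perm3 _]
  exact Finset.sum_comm

lemma sum4_nonneg (h : ∀ i j k l, 0 ≤ f i j k l) :
    (0:ℝ) ≤ ∑ i, ∑ j, ∑ k, ∑ l, f i j k l :=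
  Finset.sum_nonneg fun i _ => Finset.sum_nonneg fun j _ => Finset.sum_nonneg fun k _ =>
    Finset.sum_nonneg fun l _ => h i j k l

lemma sum4_le (f' : Fin 8 → Fin 8 → Fin 8 → Fin 8 → ℝ) (h : ∀ i j k l, f i j k l ≤ f' i j k l) :
    (∑ i, ∑ j, ∑ k, ∑ l, f i j k l) ≤ ∑ i, ∑ j, ∑ k, ∑ l, f' i j k l :=
  Finset.sum_le_sum fun i _ => Finset.sum_le_sum fun j _ => Finset.sum_le_sum fun k _ =>
    Finset.sum_le_sum fun l _ => h i j k l

lemma sum4_eq_zero (h0 : ∀ i j k l, 0 ≤ f i j k l)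
    (h : (∑ i, ∑ j, ∑ k, ∑ l, f i j k l) = 0) : ∀ i j k l, f i j k l = 0 := by
  intro i j k l
  have n3 : ∀ a b d, (0:ℝ) ≤ ∑ l, f a b d l := fun a b d =>
    Finset.sum_nonneg fun l _ => h0 a b d l
  have n2 : ∀ a b, (0:ℝ) ≤ ∑ k, ∑ l, f a b k l := fun a b =>
    Finset.sum_nonneg fun k _ => n3 a b k
  have n1 : ∀ a, (0:ℝ) ≤ ∑ j, ∑ k, ∑ l, f a j k l := fun a =>
    Finset.sum_nonneg fun j _ => n2 a j
  have h1 := (Finset.sum_eq_zero_iff_of_nonneg (fun a _ => n1 a)).mp h i (Finset.mem_univ i)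
  have h2 := (Finset.sum_eq_zero_iff_of_nonneg (fun b _ => n2 i b)).mp h1 j (Finset.mem_univ j)
  have h3 := (Finset.sum_eq_zero_iff_of_nonneg (fun d _ => n3 i j d)).mp h2 k (Finset.mem_univ k)
  exact (Finset.sum_eq_zero_iff_of_nonneg (fun m _ => h0 i j k m)).mp h3 l (Finset.mem_univ l)

end SumHelpers

-- composite square permutation lemmas
lemma sq3 (u v w x : E8) : (phi0 u v w x)^2 = (phi0 w u v x)^2 :=
  (sqB u v w x).trans (sqA u w v x)
lemma sq4 (u v w x : E8) : (phi0 u v w x)^2 = (phi0 x u v w)^2 :=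
  (sqC u v w x).trans ((sqB u v x w).trans (sqA u x v w))
lemma sqP14 (u v w x : E8) : (phi0 u v w x)^2 = (phi0 u x v w)^2 :=
  (sqC u v w x).trans (sqB u v x w)
lemma sqP23 (u v w x : E8) : (phi0 u v w x)^2 = (phi0 v w u x)^2 :=
  (sqA u v w x).trans (sqB v u w x)
lemma sqP24 (u v w x : E8) : (phi0 u v w x)^2 = (phi0 v x u w)^2 :=
  (sqA u v w x).trans ((sqC v u w x).trans (sqB v u x w))
lemma sqP34 (u v w x : E8) : (phi0 u v w x)^2 = (phi0 w x u v)^2 :=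
  (sq3 u v w x).trans (sqP14 w u v x)

-- evaluation of the ite-sum
lemma evalD (ν : Fin 8 → ℝ) :
    (∑ i, ∑ j, ν i * ν j * (if i = j then (0:ℝ) else 6))
      = 6 * (∑ i, ν i)^2 - 6 * (∑ i, (ν i)^2) := by
  have step : ∀ i, (∑ j, ν i * ν j * (if i = j then (0:ℝ) else 6))
      = 6 * (ν i * ∑ j, ν j) - 6 * (ν i)^2 := by
    intro i
    have h1 : ∀ j, ν i * ν j * (if i = j then (0:ℝ) else 6)
        = 6 * (ν i * ν j) - (if i = j then 6 * (ν i * ν j) else 0) := by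
      intro j; split_ifs <;> ring
    rw [Finset.sum_congr rfl fun j _ => h1 j, Finset.sum_sub_distrib, ← Finset.mul_sum,
      ← Finset.mul_sum, Finset.sum_ite_eq]
    simp
    ring
  rw [Finset.sum_congr rfl fun i _ => step i, Finset.sum_sub_distrib, ← Finset.mul_sum,
    ← Finset.mul_sum, ← Finset.sum_mul]
  ring


set_option maxHeartbeats 3000000 in
/-- Every invertible linear map of `ℝ^8` preserving the `Spin(7)`-form `φ₀` is
orthogonal: the stabilizer of `φ₀` lies in `O(8)`. -/
theorem stabilizer_phi0_subset_orthogonal (A : E8 ≃ₗ[ℝ] E8)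
    (hA : ∀ u v w x : E8, phi0 (A u) (A v) (A w) (A x) = phi0 u v w x) :
    ∀ u v : E8, ⟪A u, A v⟫ = ⟪u, v⟫ := by
  classical
  have hrank : Module.finrank ℝ E8 = 8 := finrank_euclideanSpace_fin
  set T : E8 →ₗ[ℝ] E8 :=
    (LinearMap.adjoint (A : E8 →ₗ[ℝ] E8)).comp (A : E8 →ₗ[ℝ] E8) with hTdef
  have hTinner : ∀ u v : E8, ⟪T u, v⟫ = ⟪A u, A v⟫ := by
    intro u v
    rw [hTdef]
    simp only [LinearMap.comp_apply]
    rw [LinearMap.adjoint_inner_left]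
    rfl
  have hTsym : T.IsSymmetric := by
    intro u v
    have h1 := hTinner u v
    have h2 := hTinner v u
    have h3 : (⟪u, T v⟫:ℝ) = ⟪T v, u⟫ := real_inner_comm _ _
    have h4 : (⟪A v, A u⟫:ℝ) = ⟪A u, A v⟫ := real_inner_comm _ _
    linarith
  set b : OrthonormalBasis (Fin 8) ℝ E8 := hTsym.eigenvectorBasis hrank with hbdef
  set μ : Fin 8 → ℝ := hTsym.eigenvalues hrank with hμdef
  have hb : ∀ i, T (b i) = μ i • b i := fun i => by
    rw [hbdef, hμdef]; exact hTsym.apply_eigenvectorBasis hrank i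
  have hbON : ∀ i j, (⟪b i, b j⟫:ℝ) = if i = j then 1 else 0 :=
    orthonormal_iff_ite.mp b.orthonormal
  have hABinner : ∀ i j, (⟪A (b i), A (b j)⟫:ℝ) = if i = j then μ i else 0 := by
    intro i j
    rw [← hTinner, hb i, real_inner_smul_left, hbON]
    split_ifs <;> ring
  have hbnz : ∀ i, b i ≠ 0 := by
    intro i
    have h := b.toBasis.ne_zero i
    rwa [OrthonormalBasis.coe_toBasis] at h
  have hμpos : ∀ i, 0 < μ i := by
    intro i
    have h1 : (⟪A (b i), A (b i)⟫:ℝ) = μ i := by rw [hABinner]; simp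
    have h2 : A (b i) ≠ 0 := by
      intro h
      exact hbnz i (A.injective (by simp [h]))
    rw [← h1, real_inner_self_eq_norm_sq]
    have := norm_pos_iff.mpr h2
    positivity
  set ν : Fin 8 → ℝ := fun i => Real.log (μ i) with hνdef
  have hμexp : ∀ i, μ i = Real.exp (ν i) := fun i => (Real.exp_log (hμpos i)).symm
  set c : Fin 8 → E8 := fun i => (Real.sqrt (μ i))⁻¹ • A (b i) with hcdef
  have hsqpos : ∀ i, 0 < Real.sqrt (μ i) := fun i => Real.sqrt_pos.mpr (hμpos i)
  have hsqmul : ∀ i, Real.sqrt (μ i) * Real.sqrt (μ i) = μ i := fun i =>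
    Real.mul_self_sqrt (hμpos i).le
  have hcON : Orthonormal ℝ c := by
    rw [orthonormal_iff_ite]
    intro i j
    simp only [hcdef]
    rw [real_inner_smul_left, real_inner_smul_right, hABinner]
    split_ifs with h
    · subst h
      have h2 := hsqmul i
      have h3 := (hsqpos i).ne'
      field_simp
      try linarith [h2]
    · ring
  have hspan : ⊤ ≤ Submodule.span ℝ (Set.range c) := by
    intro y _
    obtain ⟨z, rfl⟩ := A.surjective y
    have hz : z = ∑ i, b.repr z i • b i := (b.sum_repr z).symm
    rw [hz, map_sum]
    apply Submodule.sum_mem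
    intro i _
    rw [map_smul]
    have hAbi : A (b i) = Real.sqrt (μ i) • c i := by
      simp only [hcdef]
      rw [smul_inv_smul₀ (hsqpos i).ne']
    rw [hAbi, smul_smul]
    exact Submodule.smul_mem _ _ (Submodule.subset_span (Set.mem_range_self i))
  set cb : OrthonormalBasis (Fin 8) ℝ E8 := OrthonormalBasis.mk hcON hspan with hcbdef
  have hcb : ∀ i, cb i = c i := fun i => by
    rw [hcbdef]; exact congrFun (OrthonormalBasis.coe_mk hcON hspan) i
  have hcbON : ∀ i j, (⟪cb i, cb j⟫:ℝ) = if i = j then 1 else 0 :=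
    orthonormal_iff_ite.mp cb.orthonormal
  -- the weights
  set t : Fin 8 → Fin 8 → Fin 8 → Fin 8 → ℝ :=
    fun i j k l => (phi0 (b i) (b j) (b k) (b l))^2 with htdef
  set s : Fin 8 → Fin 8 → Fin 8 → Fin 8 → ℝ :=
    fun i j k l => (phi0 (cb i) (cb j) (cb k) (cb l))^2 with hsdef
  set θ : Fin 8 → Fin 8 → Fin 8 → Fin 8 → ℝ :=
    fun i j k l => ν i + ν j + ν k + ν l with hθdef
  have htnn : ∀ i j k l, 0 ≤ t i j k l := fun i j k l => by
    simp only [htdef]; positivity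
  -- the fundamental relation s = t * exp (-θ)
  have hst : ∀ i j k l, s i j k l = t i j k l * Real.exp (-(θ i j k l)) := by
    intro i j k l
    simp only [hsdef, htdef, hθdef]
    rw [hcb, hcb, hcb, hcb]
    simp only [hcdef]
    rw [phi0_smul₁, phi0_smul₂, phi0_smul₃, phi0_smul₄, hA]
    have hexp : ∀ m : Fin 8, ((Real.sqrt (μ m))⁻¹)^2 = Real.exp (-(ν m)) := by
      intro m
      rw [Real.exp_neg, ← hμexp m, sq, ← mul_inv, hsqmul m]
    have expand : ((Real.sqrt (μ i))⁻¹ * ((Real.sqrt (μ j))⁻¹ * ((Real.sqrt (μ k))⁻¹ *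
        ((Real.sqrt (μ l))⁻¹ * phi0 (b i) (b j) (b k) (b l)))))^2
        = ((Real.sqrt (μ i))⁻¹)^2 * ((Real.sqrt (μ j))⁻¹)^2 * ((Real.sqrt (μ k))⁻¹)^2 *
          ((Real.sqrt (μ l))⁻¹)^2 * (phi0 (b i) (b j) (b k) (b l))^2 := by ring
    rw [expand, hexp i, hexp j, hexp k, hexp l]
    rw [← Real.exp_add, ← Real.exp_add, ← Real.exp_add]
    rw [show (-(ν i) + -(ν j) + -(ν k) + -(ν l)) = -(ν i + ν j + ν k + ν l) from by ring]
    ring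
  -- pair marginals of t
  set D : Fin 8 → Fin 8 → ℝ := fun i j => if i = j then 0 else 6 with hDdef
  have hDval : ∀ p q : Fin 8, (6 : ℝ) * (1 * 1 - (if p = q then (1:ℝ) else 0)^2) = D p q := by
    intro p q; simp only [hDdef]; split_ifs <;> norm_num
  have ht12 : ∀ i j, (∑ k, ∑ l, t i j k l) = D i j := by
    intro i j
    simp only [htdef]
    rw [M2 b (b i) (b j), hbON i i, hbON j j, hbON i j]
    simp only [if_pos rfl]
    exact hDval i j
  have ht13 : ∀ i k, (∑ j, ∑ l, t i j k l) = D i k := by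
    intro i k
    simp only [htdef]
    rw [Finset.sum_congr rfl fun j _ => Finset.sum_congr rfl fun l _ =>
      sqB (b i) (b j) (b k) (b l)]
    rw [M2 b (b i) (b k), hbON i i, hbON k k, hbON i k]
    simp only [if_pos rfl]
    exact hDval i k
  have ht14 : ∀ i l, (∑ j, ∑ k, t i j k l) = D i l := by
    intro i l
    simp only [htdef]
    rw [Finset.sum_congr rfl fun j _ => Finset.sum_congr rfl fun k _ =>
      sqP14 (b i) (b j) (b k) (b l)]
    rw [M2 b (b i) (b l), hbON i i, hbON l l, hbON i l]
    simp only [if_pos rfl]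
    exact hDval i l
  have ht23 : ∀ j k, (∑ i, ∑ l, t i j k l) = D j k := by
    intro j k
    simp only [htdef]
    rw [Finset.sum_congr rfl fun i _ => Finset.sum_congr rfl fun l _ =>
      sqP23 (b i) (b j) (b k) (b l)]
    rw [M2 b (b j) (b k), hbON j j, hbON k k, hbON j k]
    simp only [if_pos rfl]
    exact hDval j k
  have ht24 : ∀ j l, (∑ i, ∑ k, t i j k l) = D j l := by
    intro j l
    simp only [htdef]
    rw [Finset.sum_congr rfl fun i _ => Finset.sum_congr rfl fun k _ =>
      sqP24 (b i) (b j) (b k) (b l)]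
    rw [M2 b (b j) (b l), hbON j j, hbON l l, hbON j l]
    simp only [if_pos rfl]
    exact hDval j l
  have ht34 : ∀ k l, (∑ i, ∑ j, t i j k l) = D k l := by
    intro k l
    simp only [htdef]
    rw [Finset.sum_congr rfl fun i _ => Finset.sum_congr rfl fun j _ =>
      sqP34 (b i) (b j) (b k) (b l)]
    rw [M2 b (b k) (b l), hbON k k, hbON l l, hbON k l]
    simp only [if_pos rfl]
    exact hDval k l
  -- single marginals of t and s
  have hone : ∀ (β : OrthonormalBasis (Fin 8) ℝ E8) (i : Fin 8),
      (42:ℝ) * ⟪β i, β i⟫ = 42 := by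
    intro β i
    rw [orthonormal_iff_ite.mp β.orthonormal i i]
    norm_num
  have ht1 : ∀ i, (∑ j, ∑ k, ∑ l, t i j k l) = 42 := by
    intro i
    simp only [htdef]
    rw [M3 b (b i)]
    exact hone b i
  have ht2 : ∀ j, (∑ i, ∑ k, ∑ l, t i j k l) = 42 := by
    intro j
    simp only [htdef]
    rw [Finset.sum_congr rfl fun i _ => Finset.sum_congr rfl fun k _ =>
      Finset.sum_congr rfl fun l _ => sqA (b i) (b j) (b k) (b l)]
    rw [M3 b (b j)]
    exact hone b j
  have ht3 : ∀ k, (∑ i, ∑ j, ∑ l, t i j k l) = 42 := by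
    intro k
    simp only [htdef]
    rw [Finset.sum_congr rfl fun i _ => Finset.sum_congr rfl fun j _ =>
      Finset.sum_congr rfl fun l _ => sq3 (b i) (b j) (b k) (b l)]
    rw [M3 b (b k)]
    exact hone b k
  have ht4 : ∀ l, (∑ i, ∑ j, ∑ k, t i j k l) = 42 := by
    intro l
    simp only [htdef]
    rw [Finset.sum_congr rfl fun i _ => Finset.sum_congr rfl fun j _ =>
      Finset.sum_congr rfl fun k _ => sq4 (b i) (b j) (b k) (b l)]
    rw [M3 b (b l)]
    exact hone b l
  have hs1 : ∀ i, (∑ j, ∑ k, ∑ l, s i j k l) = 42 := by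
    intro i
    simp only [hsdef]
    rw [M3 cb (cb i)]
    exact hone cb i
  have hs2 : ∀ j, (∑ i, ∑ k, ∑ l, s i j k l) = 42 := by
    intro j
    simp only [hsdef]
    rw [Finset.sum_congr rfl fun i _ => Finset.sum_congr rfl fun k _ =>
      Finset.sum_congr rfl fun l _ => sqA (cb i) (cb j) (cb k) (cb l)]
    rw [M3 cb (cb j)]
    exact hone cb j
  have hs3 : ∀ k, (∑ i, ∑ j, ∑ l, s i j k l) = 42 := by
    intro k
    simp only [hsdef]
    rw [Finset.sum_congr rfl fun i _ => Finset.sum_congr rfl fun j _ =>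
      Finset.sum_congr rfl fun l _ => sq3 (cb i) (cb j) (cb k) (cb l)]
    rw [M3 cb (cb k)]
    exact hone cb k
  have hs4 : ∀ l, (∑ i, ∑ j, ∑ k, s i j k l) = 42 := by
    intro l
    simp only [hsdef]
    rw [Finset.sum_congr rfl fun i _ => Finset.sum_congr rfl fun j _ =>
      Finset.sum_congr rfl fun k _ => sq4 (cb i) (cb j) (cb k) (cb l)]
    rw [M3 cb (cb l)]
    exact hone cb l
  -- total sums
  have St : (∑ i, ∑ j, ∑ k, ∑ l, t i j k l) = 336 := by
    rw [Finset.sum_congr rfl fun i (_ : i ∈ Finset.univ) => ht1 i]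
    norm_num
  have Ss : (∑ i, ∑ j, ∑ k, ∑ l, s i j k l) = 336 := by
    rw [Finset.sum_congr rfl fun i (_ : i ∈ Finset.univ) => hs1 i]
    norm_num
  -- weighted sums with a per-index function g
  have hP1 : ∀ g : Fin 8 → ℝ, (∑ i, ∑ j, ∑ k, ∑ l, t i j k l * g i) = 42 * ∑ i, g i := by
    intro g
    have inner1 : ∀ i, (∑ j, ∑ k, ∑ l, t i j k l * g i) = 42 * g i := by
      intro i
      rw [sum3_mul (fun a b d => t i a b d) (g i), ht1 i]
    rw [Finset.sum_congr rfl fun i (_ : i ∈ Finset.univ) => inner1 i, ← Finset.mul_sum]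
  have hP2 : ∀ g : Fin 8 → ℝ, (∑ i, ∑ j, ∑ k, ∑ l, t i j k l * g j) = 42 * ∑ i, g i := by
    intro g
    rw [sum4_swap12 (fun i j k l => t i j k l * g j)]
    have inner1 : ∀ j, (∑ i, ∑ k, ∑ l, t i j k l * g j) = 42 * g j := by
      intro j
      rw [sum3_mul (fun a b d => t a j b d) (g j), ht2 j]
    rw [Finset.sum_congr rfl fun j (_ : j ∈ Finset.univ) => inner1 j, ← Finset.mul_sum]
  have hP3 : ∀ g : Fin 8 → ℝ, (∑ i, ∑ j, ∑ k, ∑ l, t i j k l * g k) = 42 * ∑ i, g i := by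
    intro g
    rw [sum4_perm3 (fun i j k l => t i j k l * g k)]
    have inner1 : ∀ k, (∑ i, ∑ j, ∑ l, t i j k l * g k) = 42 * g k := by
      intro k
      rw [sum3_mul (fun a b d => t a b k d) (g k), ht3 k]
    rw [Finset.sum_congr rfl fun k (_ : k ∈ Finset.univ) => inner1 k, ← Finset.mul_sum]
  have hP4 : ∀ g : Fin 8 → ℝ, (∑ i, ∑ j, ∑ k, ∑ l, t i j k l * g l) = 42 * ∑ i, g i := by
    intro g
    rw [sum4_perm4 (fun i j k l => t i j k l * g l)]
    have inner1 : ∀ l, (∑ i, ∑ j, ∑ k, t i j k l * g l) = 42 * g l := by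
      intro l
      rw [sum3_mul (fun a b d => t a b d l) (g l), ht4 l]
    rw [Finset.sum_congr rfl fun l (_ : l ∈ Finset.univ) => inner1 l, ← Finset.mul_sum]
  -- the same for s (needed for the linear step)
  have hQ1 : ∀ g : Fin 8 → ℝ, (∑ i, ∑ j, ∑ k, ∑ l, s i j k l * g i) = 42 * ∑ i, g i := by
    intro g
    have inner1 : ∀ i, (∑ j, ∑ k, ∑ l, s i j k l * g i) = 42 * g i := by
      intro i
      rw [sum3_mul (fun a b d => s i a b d) (g i), hs1 i]
    rw [Finset.sum_congr rfl fun i (_ : i ∈ Finset.univ) => inner1 i, ← Finset.mul_sum]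
  have hQ2 : ∀ g : Fin 8 → ℝ, (∑ i, ∑ j, ∑ k, ∑ l, s i j k l * g j) = 42 * ∑ i, g i := by
    intro g
    rw [sum4_swap12 (fun i j k l => s i j k l * g j)]
    have inner1 : ∀ j, (∑ i, ∑ k, ∑ l, s i j k l * g j) = 42 * g j := by
      intro j
      rw [sum3_mul (fun a b d => s a j b d) (g j), hs2 j]
    rw [Finset.sum_congr rfl fun j (_ : j ∈ Finset.univ) => inner1 j, ← Finset.mul_sum]
  have hQ3 : ∀ g : Fin 8 → ℝ, (∑ i, ∑ j, ∑ k, ∑ l, s i j k l * g k) = 42 * ∑ i, g i := by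
    intro g
    rw [sum4_perm3 (fun i j k l => s i j k l * g k)]
    have inner1 : ∀ k, (∑ i, ∑ j, ∑ l, s i j k l * g k) = 42 * g k := by
      intro k
      rw [sum3_mul (fun a b d => s a b k d) (g k), hs3 k]
    rw [Finset.sum_congr rfl fun k (_ : k ∈ Finset.univ) => inner1 k, ← Finset.mul_sum]
  have hQ4 : ∀ g : Fin 8 → ℝ, (∑ i, ∑ j, ∑ k, ∑ l, s i j k l * g l) = 42 * ∑ i, g i := by
    intro g
    rw [sum4_perm4 (fun i j k l => s i j k l * g l)]
    have inner1 : ∀ l, (∑ i, ∑ j, ∑ k, s i j k l * g l) = 42 * g l := by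
      intro l
      rw [sum3_mul (fun a b d => s a b d l) (g l), hs4 l]
    rw [Finset.sum_congr rfl fun l (_ : l ∈ Finset.univ) => inner1 l, ← Finset.mul_sum]
  -- linear weighted sums
  set Sν : ℝ := ∑ i, ν i with hSνdef
  have Htheta : (∑ i, ∑ j, ∑ k, ∑ l, t i j k l * θ i j k l) = 168 * Sν := by
    have hsplit : ∀ i j k l : Fin 8, t i j k l * θ i j k l
        = t i j k l * ν i + (t i j k l * ν j + (t i j k l * ν k + t i j k l * ν l)) := by
      intro i j k l; simp only [hθdef]; ring
    simp only [hsplit, Finset.sum_add_distrib]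
    rw [hP1 ν, hP2 ν, hP3 ν, hP4 ν]
    rw [hSνdef]; ring
  have Hstheta : (∑ i, ∑ j, ∑ k, ∑ l, s i j k l * θ i j k l) = 168 * Sν := by
    have hsplit : ∀ i j k l : Fin 8, s i j k l * θ i j k l
        = s i j k l * ν i + (s i j k l * ν j + (s i j k l * ν k + s i j k l * ν l)) := by
      intro i j k l; simp only [hθdef]; ring
    simp only [hsplit, Finset.sum_add_distrib]
    rw [hQ1 ν, hQ2 ν, hQ3 ν, hQ4 ν]
    rw [hSνdef]; ring
  -- KL inequalities
  have hineq1 : ∀ i j k l, t i j k l - s i j k l ≤ t i j k l * θ i j k l := by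
    intro i j k l
    rw [hst i j k l]
    have h1 : -(θ i j k l) + 1 ≤ Real.exp (-(θ i j k l)) := Real.add_one_le_exp _
    have h0 := htnn i j k l
    have key := mul_le_mul_of_nonneg_left h1 h0
    nlinarith [key]
  have hineq2 : ∀ i j k l, s i j k l - t i j k l ≤ s i j k l * (-(θ i j k l)) := by
    intro i j k l
    rw [hst i j k l]
    have h1 : θ i j k l + 1 ≤ Real.exp (θ i j k l) := Real.add_one_le_exp _
    have h0 := htnn i j k l
    have h3 := (Real.exp_pos (-(θ i j k l)))
    have h2 : Real.exp (-(θ i j k l)) * Real.exp (θ i j k l) = 1 := by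
      rw [← Real.exp_add]; simp
    have hkey : t i j k l * Real.exp (-(θ i j k l)) * (θ i j k l + 1)
        ≤ t i j k l * Real.exp (-(θ i j k l)) * Real.exp (θ i j k l) :=
      mul_le_mul_of_nonneg_left h1 (mul_nonneg h0 h3.le)
    have hkey2 : t i j k l * Real.exp (-(θ i j k l)) * Real.exp (θ i j k l) = t i j k l := by
      rw [mul_assoc, h2, mul_one]
    nlinarith [hkey, hkey2]
  have hSν0 : Sν = 0 := by
    have hle1 : (∑ i, ∑ j, ∑ k, ∑ l, (t i j k l - s i j k l))
        ≤ ∑ i, ∑ j, ∑ k, ∑ l, t i j k l * θ i j k l :=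
      sum4_le _ _ hineq1
    have hle2 : (∑ i, ∑ j, ∑ k, ∑ l, (s i j k l - t i j k l))
        ≤ ∑ i, ∑ j, ∑ k, ∑ l, s i j k l * (-(θ i j k l)) :=
      sum4_le _ _ hineq2
    have hts : (∑ i, ∑ j, ∑ k, ∑ l, (t i j k l - s i j k l)) = 0 := by
      simp only [Finset.sum_sub_distrib]
      rw [St, Ss]; ring
    have hst' : (∑ i, ∑ j, ∑ k, ∑ l, (s i j k l - t i j k l)) = 0 := by
      simp only [Finset.sum_sub_distrib]
      rw [St, Ss]; ring
    have hneg : (∑ i, ∑ j, ∑ k, ∑ l, s i j k l * (-(θ i j k l)))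
        = -(∑ i, ∑ j, ∑ k, ∑ l, s i j k l * θ i j k l) := by
      simp only [mul_neg, Finset.sum_neg_distrib]
    rw [hts, Htheta] at hle1
    rw [hst', hneg, Hstheta] at hle2
    linarith
  -- pointwise support condition
  have hzero : (∑ i, ∑ j, ∑ k, ∑ l, (t i j k l * θ i j k l - (t i j k l - s i j k l))) = 0 := by
    simp only [Finset.sum_sub_distrib]
    rw [Htheta, St, Ss, hSν0]; ring
  have hnn : ∀ i j k l, 0 ≤ t i j k l * θ i j k l - (t i j k l - s i j k l) := by
    intro i j k l; linarith [hineq1 i j k l]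
  have hpt := sum4_eq_zero _ hnn hzero
  have hsupp : ∀ i j k l, t i j k l * (θ i j k l)^2 = 0 := by
    intro i j k l
    have h := hpt i j k l
    rcases eq_or_ne (θ i j k l) 0 with h0 | h0
    · rw [h0]; ring
    · have hlt : -(θ i j k l) + 1 < Real.exp (-(θ i j k l)) :=
        Real.add_one_lt_exp (neg_ne_zero.mpr h0)
      have ht0 : t i j k l = 0 := by
        rw [hst i j k l] at h
        by_contra hne
        have htpos : 0 < t i j k l := lt_of_le_of_ne (htnn i j k l) (Ne.symm hne)
        have hpos2 : 0 < θ i j k l - 1 + Real.exp (-(θ i j k l)) := by linarith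
        have hprod := mul_pos htpos hpos2
        have heq : t i j k l * θ i j k l - (t i j k l - t i j k l * Real.exp (-(θ i j k l)))
            = t i j k l * (θ i j k l - 1 + Real.exp (-(θ i j k l))) := by ring
        rw [heq] at h
        linarith
      rw [ht0]; ring
  -- quadratic step
  set Sν2 : ℝ := ∑ i, (ν i)^2 with hSν2def
  have hquadsum : (∑ i, ∑ j, ∑ k, ∑ l, t i j k l * (θ i j k l)^2) = 0 :=
    Finset.sum_eq_zero fun i _ => Finset.sum_eq_zero fun j _ => Finset.sum_eq_zero fun k _ =>
      Finset.sum_eq_zero fun l _ => hsupp i j k l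
  -- cross terms
  have hcross : ∀ (pairsum : ℝ), pairsum = 6 * Sν^2 - 6 * Sν2 → pairsum = -(6 * Sν2) := by
    intro p hp; rw [hp, hSν0]; ring
  have hC12 : (∑ i, ∑ j, ∑ k, ∑ l, t i j k l * (ν i * ν j)) = 6 * Sν^2 - 6 * Sν2 := by
    have inner1 : ∀ i j : Fin 8, (∑ k, ∑ l, t i j k l * (ν i * ν j))
        = ν i * ν j * (if i = j then 0 else 6) := by
      intro i j
      rw [sum2_mul (fun a d => t i j a d) (ν i * ν j), ht12 i j]
      simp only [hDdef]; ring
    rw [Finset.sum_congr rfl fun i (_ : i ∈ Finset.univ) =>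
      Finset.sum_congr rfl fun j (_ : j ∈ Finset.univ) => inner1 i j]
    rw [evalD ν, hSνdef, hSν2def]
  have hC13 : (∑ i, ∑ j, ∑ k, ∑ l, t i j k l * (ν i * ν k)) = 6 * Sν^2 - 6 * Sν2 := by
    have swap : ∀ i : Fin 8, (∑ j, ∑ k, ∑ l, t i j k l * (ν i * ν k))
        = ∑ k, ∑ j, ∑ l, t i j k l * (ν i * ν k) := fun i => Finset.sum_comm
    rw [Finset.sum_congr rfl fun i (_ : i ∈ Finset.univ) => swap i]
    have inner1 : ∀ i k : Fin 8, (∑ j, ∑ l, t i j k l * (ν i * ν k))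
        = ν i * ν k * (if i = k then 0 else 6) := by
      intro i k
      rw [sum2_mul (fun a d => t i a k d) (ν i * ν k), ht13 i k]
      simp only [hDdef]; ring
    rw [Finset.sum_congr rfl fun i (_ : i ∈ Finset.univ) =>
      Finset.sum_congr rfl fun k (_ : k ∈ Finset.univ) => inner1 i k]
    rw [evalD ν, hSνdef, hSν2def]
  have hC14 : (∑ i, ∑ j, ∑ k, ∑ l, t i j k l * (ν i * ν l)) = 6 * Sν^2 - 6 * Sν2 := by
    have swap : ∀ i : Fin 8, (∑ j, ∑ k, ∑ l, t i j k l * (ν i * ν l))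
        = ∑ l, ∑ j, ∑ k, t i j k l * (ν i * ν l) := fun i =>
      sum3_perm3 (fun a b d => t i a b d * (ν i * ν d))
    rw [Finset.sum_congr rfl fun i (_ : i ∈ Finset.univ) => swap i]
    have inner1 : ∀ i l : Fin 8, (∑ j, ∑ k, t i j k l * (ν i * ν l))
        = ν i * ν l * (if i = l then 0 else 6) := by
      intro i l
      rw [sum2_mul (fun a d => t i a d l) (ν i * ν l), ht14 i l]
      simp only [hDdef]; ring
    rw [Finset.sum_congr rfl fun i (_ : i ∈ Finset.univ) =>
      Finset.sum_congr rfl fun l (_ : l ∈ Finset.univ) => inner1 i l]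
    rw [evalD ν, hSνdef, hSν2def]
  have hC23 : (∑ i, ∑ j, ∑ k, ∑ l, t i j k l * (ν j * ν k)) = 6 * Sν^2 - 6 * Sν2 := by
    rw [sum4_swap12 (fun i j k l => t i j k l * (ν j * ν k))]
    have swap : ∀ j : Fin 8, (∑ i, ∑ k, ∑ l, t i j k l * (ν j * ν k))
        = ∑ k, ∑ i, ∑ l, t i j k l * (ν j * ν k) := fun j => Finset.sum_comm
    rw [Finset.sum_congr rfl fun j (_ : j ∈ Finset.univ) => swap j]
    have inner1 : ∀ j k : Fin 8, (∑ i, ∑ l, t i j k l * (ν j * ν k))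
        = ν j * ν k * (if j = k then 0 else 6) := by
      intro j k
      rw [sum2_mul (fun a d => t a j k d) (ν j * ν k), ht23 j k]
      simp only [hDdef]; ring
    rw [Finset.sum_congr rfl fun j (_ : j ∈ Finset.univ) =>
      Finset.sum_congr rfl fun k (_ : k ∈ Finset.univ) => inner1 j k]
    rw [evalD ν, hSνdef, hSν2def]
  have hC24 : (∑ i, ∑ j, ∑ k, ∑ l, t i j k l * (ν j * ν l)) = 6 * Sν^2 - 6 * Sν2 := by
    rw [sum4_swap12 (fun i j k l => t i j k l * (ν j * ν l))]
    have swap : ∀ j : Fin 8, (∑ i, ∑ k, ∑ l, t i j k l * (ν j * ν l))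
        = ∑ l, ∑ i, ∑ k, t i j k l * (ν j * ν l) := fun j =>
      sum3_perm3 (fun a b d => t a j b d * (ν j * ν d))
    rw [Finset.sum_congr rfl fun j (_ : j ∈ Finset.univ) => swap j]
    have inner1 : ∀ j l : Fin 8, (∑ i, ∑ k, t i j k l * (ν j * ν l))
        = ν j * ν l * (if j = l then 0 else 6) := by
      intro j l
      rw [sum2_mul (fun a d => t a j d l) (ν j * ν l), ht24 j l]
      simp only [hDdef]; ring
    rw [Finset.sum_congr rfl fun j (_ : j ∈ Finset.univ) =>
      Finset.sum_congr rfl fun l (_ : l ∈ Finset.univ) => inner1 j l]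
    rw [evalD ν, hSνdef, hSν2def]
  have hC34 : (∑ i, ∑ j, ∑ k, ∑ l, t i j k l * (ν k * ν l)) = 6 * Sν^2 - 6 * Sν2 := by
    rw [sum4_perm3 (fun i j k l => t i j k l * (ν k * ν l))]
    have swap : ∀ k : Fin 8, (∑ i, ∑ j, ∑ l, t i j k l * (ν k * ν l))
        = ∑ l, ∑ i, ∑ j, t i j k l * (ν k * ν l) := fun k =>
      sum3_perm3 (fun a b d => t a b k d * (ν k * ν d))
    rw [Finset.sum_congr rfl fun k (_ : k ∈ Finset.univ) => swap k]
    have inner1 : ∀ k l : Fin 8, (∑ i, ∑ j, t i j k l * (ν k * ν l))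
        = ν k * ν l * (if k = l then 0 else 6) := by
      intro k l
      rw [sum2_mul (fun a d => t a d k l) (ν k * ν l), ht34 k l]
      simp only [hDdef]; ring
    rw [Finset.sum_congr rfl fun k (_ : k ∈ Finset.univ) =>
      Finset.sum_congr rfl fun l (_ : l ∈ Finset.univ) => inner1 k l]
    rw [evalD ν, hSνdef, hSν2def]
  -- expansion of the quadratic sum
  have hSν0sq : Sν^2 = 0 := by rw [hSν0]; ring
  have hSν20 : Sν2 = 0 := by
    have hsplit : ∀ i j k l : Fin 8, t i j k l * (θ i j k l)^2
        = t i j k l * ((fun m => (ν m)^2) i) + (t i j k l * ((fun m => (ν m)^2) j)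
          + (t i j k l * ((fun m => (ν m)^2) k) + (t i j k l * ((fun m => (ν m)^2) l)
          + (2 * (t i j k l * (ν i * ν j)) + (2 * (t i j k l * (ν i * ν k))
          + (2 * (t i j k l * (ν i * ν l)) + (2 * (t i j k l * (ν j * ν k))
          + (2 * (t i j k l * (ν j * ν l)) + 2 * (t i j k l * (ν k * ν l)))))))))) := by
      intro i j k l; simp only [hθdef]; ring
    have hq := hquadsum
    rw [Finset.sum_congr rfl fun i (_ : i ∈ Finset.univ) =>
      Finset.sum_congr rfl fun j (_ : j ∈ Finset.univ) =>
      Finset.sum_congr rfl fun k (_ : k ∈ Finset.univ) =>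
      Finset.sum_congr rfl fun l (_ : l ∈ Finset.univ) => hsplit i j k l] at hq
    simp only [Finset.sum_add_distrib] at hq
    simp only [← Finset.mul_sum] at hq
    rw [hP1 (fun m => (ν m)^2), hP2 (fun m => (ν m)^2), hP3 (fun m => (ν m)^2),
      hP4 (fun m => (ν m)^2), hC12, hC13, hC14, hC23, hC24, hC34] at hq
    rw [← hSν2def] at hq
    linarith
  have hν0 : ∀ i, ν i = 0 := by
    intro i
    have hsum0 : (∑ j, (ν j)^2) = 0 := by rw [← hSν2def]; exact hSν20
    have h := (Finset.sum_eq_zero_iff_of_nonneg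
      (fun j (_ : j ∈ Finset.univ) => sq_nonneg (ν j))).mp hsum0 i (Finset.mem_univ i)
    exact (pow_eq_zero_iff (by norm_num : (2:ℕ) ≠ 0)).mp h
  have hμ1 : ∀ i, μ i = 1 := fun i => by rw [hμexp i, hν0 i, Real.exp_zero]
  have hTid : ∀ z : E8, T z = z := by
    have hbasis : ∀ i, T (b i) = b i := fun i => by rw [hb i, hμ1 i, one_smul]
    intro z
    conv_lhs => rw [← b.sum_repr z]
    rw [map_sum]
    simp only [map_smul, hbasis]
    exact b.sum_repr z
  intro u v
  rw [← hTinner u v, hTid u]
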